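/- arXiv:math/0010049 — 3 statements merged into one kernel-verified Lean document; each statement's English description precedes it below -/
import Mathlib

section
/- Let x₂, x₃, x₄, x₅ be variables and set x₁ = −(x₂+x₃+x₄+x₅)/(t+1), x₀ = −t(x₂+x₃+x₄+x₅)/(t+1) (in the field of rational functions in t). Then σ₅(x₀,…,x₅) = (x₂+x₃+x₄+x₅)·( (t/(t+1)²)·e₁e₃ − e₄ ), where eⱼ = eⱼ(x₂,x₃,x₄,x₅) is the j-th elementary symmetric polynomial and σ₅ is the fifth elementary symmetric polynomial in six variables. -/
private lemma residual_aux {K : Type*} [Field K] (t s E3 E4 : K)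
    (ht1 : t + 1 ≠ 0) :
    (-s / (t + 1)) * E4 + (-(t * s) / (t + 1)) * E4
      + (-(t * s) / (t + 1)) * (-s / (t + 1)) * E3
    = s * (t / (t + 1) ^ 2 * (s * E3) - E4) := by
  field_simp
  ring

/-- The residual quartic pencil on the Barth–Nieto quintic: setting
`x₁ = −(x₂+x₃+x₄+x₅)/(t+1)` and `x₀ = −t(x₂+x₃+x₄+x₅)/(t+1)`, the quintic
`σ₅(x₀,…,x₅)` equals `(x₂+x₃+x₄+x₅)·((t/(t+1)²)·e₁e₃ − e₄)`, where `eⱼ` is the `j`-th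
elementary symmetric polynomial in `x₂, x₃, x₄, x₅`. -/
theorem residual_quartic_pencil (K : Type*) [Field K] (t x₂ x₃ x₄ x₅ : K)
    (ht : t ≠ 0) (ht1 : t + 1 ≠ 0) :
    let s : K := x₂ + x₃ + x₄ + x₅
    let x₁ : K := -s / (t + 1)
    let x₀ : K := -(t * s) / (t + 1)
    let e₁ : K := x₂ + x₃ + x₄ + x₅
    let e₃ : K := x₂ * x₃ * x₄ + x₂ * x₃ * x₅ + x₂ * x₄ * x₅ + x₃ * x₄ * x₅
    let e₄ : K := x₂ * x₃ * x₄ * x₅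
    x₁ * x₂ * x₃ * x₄ * x₅ + x₀ * x₂ * x₃ * x₄ * x₅ + x₀ * x₁ * x₃ * x₄ * x₅
      + x₀ * x₁ * x₂ * x₄ * x₅ + x₀ * x₁ * x₂ * x₃ * x₅ + x₀ * x₁ * x₂ * x₃ * x₄
    = s * (t / (t + 1) ^ 2 * (e₁ * e₃) - e₄) := by
  intro s x₁ x₀ e₁ e₃ e₄
  linear_combination residual_aux t (x₂ + x₃ + x₄ + x₅)
    (x₂ * x₃ * x₄ + x₂ * x₃ * x₅ + x₂ * x₄ * x₅ + x₃ * x₄ * x₅)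
    (x₂ * x₃ * x₄ * x₅) ht1
end

section
/- Let p ≥ 5 be prime. The fixed points of the involution (x₀:…:x₅) ↦ (x₀⁻¹:…:x₅⁻¹) on U(𝔽_p) = { (x₀:…:x₅) ∈ P⁵(𝔽_p) : Σxᵢ = 0, Σxᵢ⁻¹ = 0, all xᵢ ≠ 0 } are exactly the 10 Segre points, i.e. the points (x₀:…:x₅) where three of the coordinates equal some λ and the other three equal −λ. -/
lemma aux_cast_eq (p a b : ℕ) (hp : p.Prime) (hp5 : 5 ≤ p) (hab : a + b = 6)
    (h : (a : ZMod p) = (b : ZMod p)) : a = b := by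
  haveI : Fact p.Prime := ⟨hp⟩
  rw [ZMod.natCast_eq_natCast_iff] at h
  have h2 : a % p = b % p := h
  rcases lt_or_ge p 7 with h7 | h7
  · interval_cases p
    · omega
    · exact absurd hp (by norm_num)
  · rw [Nat.mod_eq_of_lt (by omega), Nat.mod_eq_of_lt (by omega)] at h2
    exact h2

/-- The fixed points of the involution `x ↦ x⁻¹` (coordinatewise) on the open part of the
Barth–Nieto quintic over `𝔽_p` are exactly the Segre points: a point `x` with all `xᵢ ≠ 0`,
`Σxᵢ = 0`, `Σxᵢ⁻¹ = 0` is fixed (i.e. `xᵢ⁻¹ = μ·xᵢ` for some `μ` and all `i`) if and only if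
there is `λ ≠ 0` and a set of three indices on which `x` equals `λ` while on the complementary
three indices `x` equals `−λ`. -/
theorem fixed_points_are_segre (p : ℕ) (hp : p.Prime) (hp5 : 5 ≤ p) :
    haveI : Fact p.Prime := ⟨hp⟩
    ∀ x : Fin 6 → ZMod p, (∀ i, x i ≠ 0) → (∑ i, x i) = 0 → (∑ i, (x i)⁻¹) = 0 →
      ((∃ μ : ZMod p, ∀ i, (x i)⁻¹ = μ * x i) ↔
        ∃ (lam : ZMod p) (s : Finset (Fin 6)), lam ≠ 0 ∧ s.card = 3 ∧
          ∀ i, x i = if i ∈ s then lam else -lam) := by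
  haveI : Fact p.Prime := ⟨hp⟩
  intro x hx hsum hsuminv
  constructor
  · rintro ⟨μ, h⟩
    have hμ : μ ≠ 0 := by
      intro h0
      have := h 0
      rw [h0, zero_mul, inv_eq_zero] at this
      exact hx 0 this
    have hsq : ∀ i, x i * x i = μ⁻¹ := by
      intro i
      have hi := h i
      have : x i * (x i)⁻¹ = 1 := mul_inv_cancel₀ (hx i)
      rw [hi] at this
      field_simp at this ⊢
      linear_combination this
    have hpm : ∀ i, x i = x 0 ∨ x i = -(x 0) := by
      intro i
      have : x i * x i = x 0 * x 0 := (hsq i).trans (hsq 0).symm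
      exact mul_self_eq_mul_self_iff.mp this
    set lam := x 0 with hlam
    have hlam0 : lam ≠ 0 := hx 0
    set s : Finset (Fin 6) := Finset.univ.filter (fun i => x i = lam) with hs
    have hmem : ∀ i, i ∈ s ↔ x i = lam := by
      intro i; simp [hs]
    have hval : ∀ i, x i = if i ∈ s then lam else -lam := by
      intro i
      by_cases hi : i ∈ s
      · simp [hi, (hmem i).mp hi]
      · rcases hpm i with h1 | h1
        · exact absurd ((hmem i).mpr h1) hi
        · simp [hi, h1]
    have hsum2 : ((s.card : ZMod p) - ((6 - s.card : ℕ) : ZMod p)) * lam = 0 := by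
      have := hsum
      rw [← Finset.sum_add_sum_compl s] at this
      have h1 : ∑ i ∈ s, x i = (s.card : ZMod p) * lam := by
        rw [Finset.sum_congr rfl (fun i hi => (hmem i).mp hi), Finset.sum_const,
          nsmul_eq_mul]
      have h2 : ∑ i ∈ sᶜ, x i = ((6 - s.card : ℕ) : ZMod p) * (-lam) := by
        have hc : sᶜ.card = 6 - s.card := by
          rw [Finset.card_compl, Fintype.card_fin]
        rw [Finset.sum_congr rfl (fun i hi => ?_), Finset.sum_const, nsmul_eq_mul, hc]
        rcases hpm i with h1 | h1
        · exact absurd ((hmem i).mpr h1) (Finset.mem_compl.mp hi)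
        · exact h1
      rw [h1, h2] at this
      linear_combination this
    have hk : s.card = 6 - s.card := by
      have hcle : s.card ≤ 6 := by
        have := Finset.card_le_univ s
        simpa using this
      have := mul_eq_zero.mp hsum2
      rcases this with h0 | h0
      · have : (s.card : ZMod p) = ((6 - s.card : ℕ) : ZMod p) := by
          linear_combination h0
        exact aux_cast_eq p _ _ hp hp5 (by omega) this
      · exact absurd h0 hlam0
    have hcard : s.card = 3 := by omega
    exact ⟨lam, s, hlam0, hcard, hval⟩
  · rintro ⟨lam, s, hlam0, hcard, hval⟩
    refine ⟨(lam * lam)⁻¹, fun i => ?_⟩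
    rw [hval i]
    by_cases hi : i ∈ s <;> simp [hi] <;> field_simp
end

section
/- For every prime p ≥ 5, the cardinality #U(𝔽_p) of the set U(𝔽_p) = { (x₀:…:x₅) ∈ P⁵(𝔽_p) : Σxᵢ = 0, Σxᵢ⁻¹ = 0, all xᵢ ≠ 0 } is even. -/
open Projectivization

/-- The open part of the Barth–Nieto quintic in `ℙ⁵(𝔽_p)`: all coordinates nonzero,
`Σ xᵢ = 0` and `Σ xᵢ⁻¹ = 0` (these conditions are invariant under scaling, so they may be
tested on the chosen representative). -/
def barthNietoU (p : ℕ) [Fact p.Prime] :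
    Set (Projectivization (ZMod p) (Fin 6 → ZMod p)) :=
  {x | (∀ i, x.rep i ≠ 0) ∧ (∑ i, x.rep i) = 0 ∧ (∑ i, (x.rep i)⁻¹) = 0}

section aux

variable {p : ℕ} [Fact p.Prime]

instance : Finite (Projectivization (ZMod p) (Fin 6 → ZMod p)) := Quotient.finite _

lemma bn_sum_pm (S : Finset (Fin 6)) (hS : S.card = 3) (c : ZMod p) :
    ∑ i, (if i ∈ S then c else -c) = 0 := by
  rw [Finset.sum_ite, Finset.sum_const, Finset.sum_const, Finset.filter_univ_mem]
  have : (Finset.univ.filter (fun i => ¬ i ∈ S)).card = 3 := by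
    have := Finset.card_filter_add_card_filter_not (s := (Finset.univ : Finset (Fin 6)))
      (p := fun i => i ∈ S)
    simp only [Finset.filter_univ_mem, Finset.card_univ, Fintype.card_fin] at this
    omega
  rw [hS, this]
  ring_nf

lemma bn_card_eq_three (hp5 : 5 ≤ p) (S : Finset (Fin 6)) {c : ZMod p} (hc : c ≠ 0)
    (h : ∑ i, (if i ∈ S then c else -c) = 0) : S.card = 3 := by
  have hp := (Fact.out : p.Prime)
  have hcompl : (Finset.univ.filter (fun i => ¬ i ∈ S)).card = 6 - S.card := by
    have := Finset.card_filter_add_card_filter_not (s := (Finset.univ : Finset (Fin 6)))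
      (p := fun i => i ∈ S)
    simp only [Finset.filter_univ_mem, Finset.card_univ, Fintype.card_fin] at this
    omega
  rw [Finset.sum_ite, Finset.sum_const, Finset.sum_const, Finset.filter_univ_mem, hcompl] at h
  have hk : S.card ≤ 6 := by simpa using Finset.card_le_univ S
  have h2 : ((S.card : ZMod p) - ((6 - S.card : ℕ) : ZMod p)) * c = 0 := by
    rw [nsmul_eq_mul, nsmul_eq_mul] at h
    linear_combination h
  have h3 : (S.card : ZMod p) = ((6 - S.card : ℕ) : ZMod p) := by
    rcases mul_eq_zero.mp h2 with h' | h'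
    · linear_combination h'
    · exact absurd h' hc
  rw [ZMod.natCast_eq_natCast_iff] at h3
  have h4 : (p:ℤ) ∣ ((6 - S.card : ℕ) : ℤ) - (S.card : ℤ) := h3.dvd
  interval_cases hS : S.card <;> norm_num at h4 ⊢ <;>
  · have h5 := Int.natAbs_dvd_natAbs.mpr h4
    norm_num at h5
    have h6 := Nat.le_of_dvd (by norm_num) h5
    interval_cases p <;> first | omega | norm_num at hp

/-- the inverse vector of a point with all coordinates nonzero is nonzero -/
lemma bn_inv_ne_zero (x : Projectivization (ZMod p) (Fin 6 → ZMod p))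
    (hx : ∀ i, x.rep i ≠ 0) : (fun i => (x.rep i)⁻¹) ≠ (0 : Fin 6 → ZMod p) := by
  intro h
  exact (inv_ne_zero (hx 0)) (congrFun h 0)

/-- The involution on `U`. -/
noncomputable def bnInv (x : ↥(barthNietoU p)) : ↥(barthNietoU p) := by
  refine ⟨Projectivization.mk (ZMod p) (fun i => ((x : Projectivization (ZMod p) (Fin 6 → ZMod p)).rep i)⁻¹)
    (bn_inv_ne_zero _ x.2.1), ?_⟩
  obtain ⟨h1, h2, h3⟩ := x.2
  obtain ⟨a, ha⟩ := Projectivization.exists_smul_eq_mk_rep (ZMod p)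
    (fun i => ((x : Projectivization (ZMod p) (Fin 6 → ZMod p)).rep i)⁻¹) (bn_inv_ne_zero _ h1)
  refine ⟨?_, ?_, ?_⟩
  · intro i
    rw [← ha]
    simp only [Pi.smul_apply, Units.smul_def, smul_eq_mul]
    exact mul_ne_zero (Units.ne_zero a) (inv_ne_zero (h1 i))
  · rw [← ha]
    simp only [Pi.smul_apply, Units.smul_def, smul_eq_mul, ← Finset.mul_sum]
    rw [h3, mul_zero]
  · rw [← ha]
    simp only [Pi.smul_apply, Units.smul_def, smul_eq_mul, mul_inv, inv_inv]
    rw [← Finset.mul_sum, h2, mul_zero]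

lemma bnInv_involutive : Function.Involutive (bnInv (p := p)) := by
  intro x
  obtain ⟨h1, h2, h3⟩ := x.2
  obtain ⟨a, ha⟩ := Projectivization.exists_smul_eq_mk_rep (ZMod p)
    (fun i => ((x : Projectivization (ZMod p) (Fin 6 → ZMod p)).rep i)⁻¹) (bn_inv_ne_zero _ h1)
  apply Subtype.ext
  show Projectivization.mk (ZMod p) _ _ = _
  conv_rhs => rw [← Projectivization.mk_rep (x : Projectivization (ZMod p) (Fin 6 → ZMod p))]
  rw [Projectivization.mk_eq_mk_iff]
  refine ⟨a⁻¹, ?_⟩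
  funext i
  have hcoord : (bnInv x : Projectivization (ZMod p) (Fin 6 → ZMod p)).rep i
      = (a : ZMod p) * ((x : Projectivization (ZMod p) (Fin 6 → ZMod p)).rep i)⁻¹ := by
    have hval : (bnInv x : Projectivization (ZMod p) (Fin 6 → ZMod p))
        = Projectivization.mk (ZMod p)
          (fun i => ((x : Projectivization (ZMod p) (Fin 6 → ZMod p)).rep i)⁻¹)
          (bn_inv_ne_zero _ h1) := rfl
    rw [hval, ← ha]
    rfl
  rw [Pi.smul_apply, Units.smul_def, smul_eq_mul, hcoord, mul_inv, inv_inv,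
    Units.val_inv_eq_inv_val]

end aux

section fixedpts

variable {p : ℕ} [Fact p.Prime]

/-- the sign vector of a subset -/
def bnV (S : Finset (Fin 6)) : Fin 6 → ZMod p := fun i => if i ∈ S then 1 else -1

lemma bnV_ne_zero (S : Finset (Fin 6)) : bnV (p := p) S ≠ 0 := by
  intro h
  have := congrFun h 0
  by_cases h0 : (0 : Fin 6) ∈ S <;> simp [bnV, h0] at this

lemma bnV_inv (S : Finset (Fin 6)) (i : Fin 6) : (bnV (p := p) S i)⁻¹ = bnV S i := by
  by_cases h0 : i ∈ S <;> simp [bnV, h0, inv_neg]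

lemma bnV_ne_zero' (S : Finset (Fin 6)) (i : Fin 6) : bnV (p := p) S i ≠ 0 := by
  by_cases h0 : i ∈ S <;> simp [bnV, h0]

lemma bnV_mem (S : Finset (Fin 6)) (hS : S.card = 3) :
    Projectivization.mk (ZMod p) (bnV (p := p) S) (bnV_ne_zero S) ∈ barthNietoU p := by
  obtain ⟨a, ha⟩ := Projectivization.exists_smul_eq_mk_rep (ZMod p) (bnV (p := p) S) (bnV_ne_zero S)
  refine ⟨?_, ?_, ?_⟩
  · intro i
    rw [← ha]
    exact mul_ne_zero (Units.ne_zero a) (bnV_ne_zero' S i)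
  · rw [← ha]
    simp only [Pi.smul_apply, Units.smul_def, smul_eq_mul, ← Finset.mul_sum]
    rw [show ∑ i, bnV (p := p) S i = 0 from bn_sum_pm S hS 1, mul_zero]
  · rw [← ha]
    simp only [Pi.smul_apply, Units.smul_def, smul_eq_mul, mul_inv, bnV_inv, ← Finset.mul_sum]
    rw [show ∑ i, bnV (p := p) S i = 0 from bn_sum_pm S hS 1, mul_zero]

lemma bnV_fixed (S : Finset (Fin 6)) (hS : S.card = 3) :
    bnInv ⟨_, bnV_mem (p := p) S hS⟩ = ⟨_, bnV_mem (p := p) S hS⟩ := by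
  obtain ⟨a, ha⟩ := Projectivization.exists_smul_eq_mk_rep (ZMod p) (bnV (p := p) S) (bnV_ne_zero S)
  apply Subtype.ext
  show Projectivization.mk (ZMod p) _ _ = _
  rw [Projectivization.mk_eq_mk_iff]
  refine ⟨a⁻¹, ?_⟩
  funext i
  have : (Projectivization.mk (ZMod p) (bnV (p := p) S) (bnV_ne_zero S)).rep i
      = (a : ZMod p) * bnV S i := by rw [← ha]; rfl
  rw [Pi.smul_apply, Units.smul_def, smul_eq_mul, this, mul_inv, bnV_inv,
    Units.val_inv_eq_inv_val]

end fixedpts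

section surj

variable {p : ℕ} [Fact p.Prime]

lemma bn_fixed_eq (hp5 : 5 ≤ p) (x : ↥(barthNietoU p)) (hx : bnInv x = x) :
    ∃ S : Finset (Fin 6), (0 : Fin 6) ∈ S ∧ S.card = 3 ∧
      (x : Projectivization (ZMod p) (Fin 6 → ZMod p))
        = Projectivization.mk (ZMod p) (bnV (p := p) S) (bnV_ne_zero S) := by
  obtain ⟨h1, h2, h3⟩ := x.2
  set y := (x : Projectivization (ZMod p) (Fin 6 → ZMod p)) with hy
  have hmk : Projectivization.mk (ZMod p) (fun i => (y.rep i)⁻¹) (bn_inv_ne_zero _ h1)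
      = Projectivization.mk (ZMod p) y.rep y.rep_nonzero := by
    have := congrArg Subtype.val hx
    rw [Projectivization.mk_rep]; exact this
  rw [Projectivization.mk_eq_mk_iff] at hmk
  obtain ⟨a, ha⟩ := hmk
  have hinv : ∀ i, (y.rep i)⁻¹ = (a : ZMod p) * y.rep i := fun i => (congrFun ha i).symm
  have key : ∀ i, (a : ZMod p) * (y.rep i * y.rep i) = 1 := by
    intro i
    have h := inv_mul_cancel₀ (h1 i)
    rw [hinv i] at h
    linear_combination h
  have hpm : ∀ i, y.rep i = y.rep 0 ∨ y.rep i = -(y.rep 0) := by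
    intro i
    have h := mul_left_cancel₀ (Units.ne_zero a) ((key i).trans (key 0).symm)
    have : (y.rep i - y.rep 0) * (y.rep i + y.rep 0) = 0 := by linear_combination h
    rcases mul_eq_zero.mp this with h' | h'
    · left; linear_combination h'
    · right; linear_combination h'
  classical
  set S : Finset (Fin 6) := Finset.univ.filter (fun i => y.rep i = y.rep 0) with hSdef
  have hrep : ∀ i, y.rep i = if i ∈ S then y.rep 0 else -(y.rep 0) := by
    intro i
    by_cases hi : i ∈ S
    · simp only [hi, if_true]
      simpa [hSdef] using hi
    · simp only [hi, if_false]
      rcases hpm i with h' | h'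
      · exact absurd (by simp [hSdef, h']) hi
      · exact h'
  have hS0 : (0 : Fin 6) ∈ S := by simp [hSdef]
  have hScard : S.card = 3 := by
    apply bn_card_eq_three hp5 S (h1 0)
    rw [← h2]
    exact Finset.sum_congr rfl fun i _ => (hrep i).symm
  refine ⟨S, hS0, hScard, ?_⟩
  conv_lhs => rw [← Projectivization.mk_rep y]
  rw [Projectivization.mk_eq_mk_iff]
  refine ⟨Units.mk0 (y.rep 0) (h1 0), ?_⟩
  funext i
  rw [Pi.smul_apply, Units.smul_def, smul_eq_mul, Units.val_mk0, hrep i, bnV]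
  by_cases hi : i ∈ S <;> simp [hi]

end surj

lemma bnV_injective {p : ℕ} [Fact p.Prime] (h1ne : (1 : ZMod p) ≠ -1)
    {S S' : Finset (Fin 6)} (h0 : (0 : Fin 6) ∈ S) (h0' : (0 : Fin 6) ∈ S')
    (h : Projectivization.mk (ZMod p) (bnV (p := p) S) (bnV_ne_zero S)
      = Projectivization.mk (ZMod p) (bnV (p := p) S') (bnV_ne_zero S')) : S = S' := by
  rw [Projectivization.mk_eq_mk_iff] at h
  obtain ⟨a, ha⟩ := h
  have ha0 := congrFun ha 0
  simp only [Pi.smul_apply, Units.smul_def, smul_eq_mul, bnV, h0, h0', if_true] at ha0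
  rw [mul_one] at ha0
  ext i
  have hai := congrFun ha i
  simp only [Pi.smul_apply, Units.smul_def, smul_eq_mul, ha0, one_mul] at hai
  constructor <;> intro hi
  · by_contra hi'
    rw [bnV, bnV, if_pos hi, if_neg hi'] at hai
    exact h1ne hai.symm
  · by_contra hi'
    rw [bnV, bnV, if_neg hi', if_pos hi] at hai
    exact h1ne hai

lemma bn_T_even : Even (Nat.card {S : Finset (Fin 6) // (0 : Fin 6) ∈ S ∧ S.card = 3}) := by
  rw [Nat.card_eq_fintype_card]
  decide

/-- For every prime `p ≥ 5`, the number of `𝔽_p`-points of the open part of the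
Barth–Nieto quintic is even. -/
theorem card_barthNietoU_even (p : ℕ) (hp : p.Prime) (hp5 : 5 ≤ p) :
    haveI : Fact p.Prime := ⟨hp⟩
    Even (barthNietoU p).ncard := by
  haveI : Fact p.Prime := ⟨hp⟩
  classical
  letI : Fintype ↥(barthNietoU p) := Fintype.ofFinite _
  let f : Function.End ↥(barthNietoU p) := bnInv
  have hf2 : f ^ 2 ^ 1 = 1 := by
    have hmul : f * f = 1 := funext fun x => bnInv_involutive x
    calc f ^ 2 ^ 1 = f * f := by rw [pow_one, sq]
    _ = 1 := hmul
  haveI : Fact (Nat.Prime 2) := ⟨Nat.prime_two⟩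
  have hmod := Equiv.Perm.card_fixedPoints_modEq (f := f) (n := 1) hf2
  rw [← Nat.card_eq_fintype_card, ← Nat.card_eq_fintype_card] at hmod
  have h1ne : (1 : ZMod p) ≠ -1 := by
    intro h
    have h2 : (2 : ZMod p) = 0 := by linear_combination h
    have hd : p ∣ 2 := by
      have : ((2 : ℕ) : ZMod p) = 0 := by exact_mod_cast h2
      exact (ZMod.natCast_eq_zero_iff 2 p).mp this
    have := Nat.le_of_dvd (by norm_num) hd
    omega
  have hcard : Nat.card ↥(Function.fixedPoints f)
      = Nat.card {S : Finset (Fin 6) // (0 : Fin 6) ∈ S ∧ S.card = 3} := by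
    refine (Nat.card_eq_of_bijective
      (fun S : {S : Finset (Fin 6) // (0 : Fin 6) ∈ S ∧ S.card = 3} =>
        (⟨⟨_, bnV_mem (p := p) S.1 S.2.2⟩, bnV_fixed S.1 S.2.2⟩ :
          ↥(Function.fixedPoints f))) ⟨?_, ?_⟩).symm
    · rintro ⟨S, hS0, hS3⟩ ⟨S', hS0', hS3'⟩ h
      have hmk := congrArg (fun z => ((z : ↥(Function.fixedPoints f)) : ↥(barthNietoU p)).1) h
      exact Subtype.ext (bnV_injective h1ne hS0 hS0' hmk)
    · rintro ⟨z, hz⟩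
      obtain ⟨S, h0, h3, heq⟩ := bn_fixed_eq hp5 z hz
      refine ⟨⟨S, h0, h3⟩, ?_⟩
      apply Subtype.ext
      apply Subtype.ext
      exact heq.symm
  rw [← Nat.card_coe_set_eq, Nat.even_iff]
  rw [Nat.ModEq] at hmod
  rw [hmod, hcard, ← Nat.even_iff]
  exact bn_T_even
end
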